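/- Validity of the even straight-node evasion strategy: if N ≥ 1 and i is a straight index with i even and 1 ≤ i ≤ 4^N−2, then i+3 ≤ 4^N−1 and the node h_N(i+3) is vertex connected to both h_N(i−1) and h_N(i+1); hence a blocked node at index i can be evaded by the detour h_N(i−1) → h_N(i+3) → h_N(i+1). -/

import Mathlib

/-- The `N`-th order approximated Hilbert curve, mapping indices `{0,...,4^N-1}`
to nodes of the grid `{0,...,2^N-1} × {0,...,2^N-1} ⊆ ℤ × ℤ`. -/
def hilbert : ℕ → ℕ → ℤ × ℤ
  | 0, _ => (0, 0)
  | 1, i =>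
    if i = 0 then (0, 0)
    else if i = 1 then (0, 1)
    else if i = 2 then (1, 1)
    else (1, 0)
  | N + 2, i =>
    let q := i / 4 ^ (N + 1)
    let s : ℤ := 2 ^ (N + 1)
    let p := hilbert (N + 1) (i % 4 ^ (N + 1))
    if q = 0 then (p.2, p.1)
    else if q = 1 then (p.1, p.2 + s)
    else if q = 2 then (p.1 + s, p.2 + s)
    else (2 * s - 1 - p.2, s - 1 - p.1)

/-- Euclidean distance between two points of `ℤ × ℤ`. -/
noncomputable def euclDist (a b : ℤ × ℤ) : ℝ :=
  Real.sqrt (((a.1 - b.1 : ℤ) : ℝ) ^ 2 + ((a.2 - b.2 : ℤ) : ℝ) ^ 2)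

/-- Two points of `ℤ × ℤ` are edge connected if their Euclidean distance equals 1. -/
def EdgeConnected (a b : ℤ × ℤ) : Prop := euclDist a b = 1

/-- Two points of `ℤ × ℤ` are vertex connected if both coordinates differ by exactly 1. -/
def VertexConnected (a b : ℤ × ℤ) : Prop := |a.1 - b.1| = 1 ∧ |a.2 - b.2| = 1

/-- Membership in the grid `{0,...,2^N-1} × {0,...,2^N-1}`. -/
def InGrid (N : ℕ) (p : ℤ × ℤ) : Prop :=
  0 ≤ p.1 ∧ p.1 ≤ 2 ^ N - 1 ∧ 0 ≤ p.2 ∧ p.2 ≤ 2 ^ N - 1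

/-- The closed segment from `u` to `v` (centres of cells, viewed in `ℝ²`) is disjoint
from the open unit cell centred at `c`. -/
def SegAvoidsCell (u v c : ℤ × ℤ) : Prop :=
  ∀ t : ℝ, t ∈ Set.Icc (0 : ℝ) 1 →
    ¬ (|(1 - t) * (u.1 : ℝ) + t * (v.1 : ℝ) - (c.1 : ℝ)| < 1 / 2 ∧
       |(1 - t) * (u.2 : ℝ) + t * (v.2 : ℝ) - (c.2 : ℝ)| < 1 / 2)

/-- An evasion tour for the blocked index set `B` on the `N`-th order Hilbert grid:
a sequence of waypoints `w 0, ..., w m` in the grid, starting at the entry node,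
ending at the exit node, avoiding all blocked nodes, covering every unblocked grid
point, and whose straight-line segments avoid the interiors of all blocked cells. -/
def IsEvasionTour (N : ℕ) (B : Finset ℕ) (m : ℕ) (w : ℕ → ℤ × ℤ) : Prop :=
  w 0 = hilbert N 0 ∧
  w m = hilbert N (4 ^ N - 1) ∧
  (∀ j ≤ m, InGrid N (w j)) ∧
  (∀ j ≤ m, ∀ b ∈ B, w j ≠ hilbert N b) ∧
  (∀ p : ℤ × ℤ, InGrid N p → (∀ b ∈ B, p ≠ hilbert N b) → ∃ j ≤ m, w j = p) ∧
  (∀ j < m, ∀ b ∈ B, SegAvoidsCell (w j) (w (j + 1)) (hilbert N b))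


def UnitVec (a : ℤ × ℤ) : Prop := a = (1,0) ∨ a = (-1,0) ∨ a = (0,1) ∨ a = (0,-1)

lemma hilbert_succ_eq (m t : ℕ) :
    hilbert (m + 1 + 1) t =
      (if t / 4 ^ (m+1) = 0 then ((hilbert (m+1) (t % 4 ^ (m+1))).2, (hilbert (m+1) (t % 4 ^ (m+1))).1)
       else if t / 4 ^ (m+1) = 1 then ((hilbert (m+1) (t % 4 ^ (m+1))).1, (hilbert (m+1) (t % 4 ^ (m+1))).2 + 2^(m+1))
       else if t / 4 ^ (m+1) = 2 then ((hilbert (m+1) (t % 4 ^ (m+1))).1 + 2^(m+1), (hilbert (m+1) (t % 4 ^ (m+1))).2 + 2^(m+1))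
       else (2 * 2^(m+1) - 1 - (hilbert (m+1) (t % 4 ^ (m+1))).2, 2^(m+1) - 1 - (hilbert (m+1) (t % 4 ^ (m+1))).1)) := by
  rfl

lemma hilbert_quad : ∀ N, 1 ≤ N → ∀ k, 4*k+3 ≤ 4^N - 1 →
    ∃ a b : ℤ × ℤ, UnitVec a ∧ UnitVec b ∧ a.1*b.1 + a.2*b.2 = 0 ∧
      hilbert N (4*k+1) = hilbert N (4*k) + a ∧
      hilbert N (4*k+2) = hilbert N (4*k) + a + b ∧
      hilbert N (4*k+3) = hilbert N (4*k) + b := by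
  intro N
  induction N with
  | zero => omega
  | succ n ih =>
    cases n with
    | zero =>
      intro _ k hk
      norm_num at hk
      have hk0 : k = 0 := by omega
      subst hk0
      refine ⟨(0,1),(1,0), by simp [UnitVec], by simp [UnitVec], by norm_num, ?_, ?_, ?_⟩ <;> decide
    | succ m =>
      intro _ k hk
      have hs4pos : 0 < 4 ^ (m+1) := Nat.pow_pos (by norm_num)
      have hs44 : (4:ℕ) ∣ 4 ^ (m+1) := dvd_pow_self 4 (by omega)
      have hs4ge : 4 ≤ 4 ^ (m+1) := Nat.le_of_dvd hs4pos hs44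
      set i := 4 * k with hi
      have hNpow : (4:ℕ) ^ (m+2) = 4 * 4 ^ (m+1) := by ring
      have hilt : i + 3 < 4 ^ (m+2) := by omega
      obtain ⟨q, hq⟩ : ∃ q, i / 4 ^ (m+1) = q := ⟨_, rfl⟩
      obtain ⟨r, hr⟩ : ∃ r, i % 4 ^ (m+1) = r := ⟨_, rfl⟩
      have hdm : 4 ^ (m+1) * q + r = i := by rw [← hq, ← hr]; exact Nat.div_add_mod i _
      have hrs : r < 4 ^ (m+1) := by rw [← hr]; exact Nat.mod_lt _ hs4pos
      have hr4 : r % 4 = 0 := by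
        have h := Nat.mod_mod_of_dvd i hs44
        rw [hr] at h
        omega
      have hrle : r + 3 < 4 ^ (m+1) := by omega
      have key : ∀ j, j ≤ 3 → (i+j) / 4 ^ (m+1) = q ∧ (i+j) % 4 ^ (m+1) = r + j := by
        intro j hj
        have h1 : i + j = 4 ^ (m+1) * q + (r + j) := by omega
        constructor
        · rw [h1, Nat.mul_add_div hs4pos, Nat.div_eq_of_lt (by omega)]; omega
        · rw [h1, Nat.mul_add_mod, Nat.mod_eq_of_lt (by omega)]
      have hqlt : q < 4 := by
        rw [← hq, Nat.div_lt_iff_lt_mul hs4pos]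
        omega
      obtain ⟨a, b, ha, hb, hab, e1, e2, e3⟩ := ih (by omega) (r / 4) (by omega)
      have hr' : 4 * (r / 4) = r := by omega
      rw [hr'] at e1 e2 e3
      have h0 := hilbert_succ_eq m i
      have h1 := hilbert_succ_eq m (i+1)
      have h2 := hilbert_succ_eq m (i+2)
      have h3 := hilbert_succ_eq m (i+3)
      have k0 := key 0 (by norm_num)
      simp only [Nat.add_zero] at k0
      rw [k0.1, k0.2] at h0
      rw [(key 1 (by norm_num)).1, (key 1 (by norm_num)).2] at h1
      rw [(key 2 (by norm_num)).1, (key 2 (by norm_num)).2] at h2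
      rw [(key 3 (by norm_num)).1, (key 3 (by norm_num)).2] at h3
      interval_cases q
      · -- q = 0 : (x,y) ↦ (y,x)
        norm_num at h0 h1 h2 h3
        refine ⟨(a.2, a.1), (b.2, b.1), ?_, ?_, by linear_combination hab, ?_, ?_, ?_⟩
        · rcases ha with rfl|rfl|rfl|rfl <;> simp [UnitVec]
        · rcases hb with rfl|rfl|rfl|rfl <;> simp [UnitVec]
        · rw [h1, h0, e1]; simp [Prod.ext_iff]
        · rw [h2, h0, e2]; simp [Prod.ext_iff]
        · rw [h3, h0, e3]; simp [Prod.ext_iff]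
      · -- q = 1 : (x,y) ↦ (x, y+s)
        norm_num at h0 h1 h2 h3
        refine ⟨a, b, ha, hb, hab, ?_, ?_, ?_⟩
        · rw [h1, h0, e1]; simp [Prod.ext_iff]; ring
        · rw [h2, h0, e2]; simp [Prod.ext_iff]; ring
        · rw [h3, h0, e3]; simp [Prod.ext_iff]; ring
      · -- q = 2
        norm_num at h0 h1 h2 h3
        refine ⟨a, b, ha, hb, hab, ?_, ?_, ?_⟩
        · rw [h1, h0, e1]; simp [Prod.ext_iff]; constructor <;> ring
        · rw [h2, h0, e2]; simp [Prod.ext_iff]; constructor <;> ring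
        · rw [h3, h0, e3]; simp [Prod.ext_iff]; constructor <;> ring
      · -- q = 3 : (x,y) ↦ (2s-1-y, s-1-x)
        norm_num at h0 h1 h2 h3
        refine ⟨(-a.2, -a.1), (-b.2, -b.1), ?_, ?_, by linear_combination hab, ?_, ?_, ?_⟩
        · rcases ha with rfl|rfl|rfl|rfl <;> simp [UnitVec]
        · rcases hb with rfl|rfl|rfl|rfl <;> simp [UnitVec]
        · rw [h1, h0, e1]; simp [Prod.ext_iff]; constructor <;> ring
        · rw [h2, h0, e2]; simp [Prod.ext_iff]; constructor <;> ring
        · rw [h3, h0, e3]; simp [Prod.ext_iff]; constructor <;> ring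

theorem hilbert_straight_even_evasion (N i : ℕ) (hN : 1 ≤ N) (h1 : 1 ≤ i)
    (h2 : i ≤ 4 ^ N - 2) (heven : i % 2 = 0)
    (hstraight : hilbert N (i + 1) - hilbert N i = hilbert N i - hilbert N (i - 1)) :
    i + 3 ≤ 4 ^ N - 1 ∧
    VertexConnected (hilbert N (i + 3)) (hilbert N (i - 1)) ∧
    VertexConnected (hilbert N (i + 3)) (hilbert N (i + 1)) := by
  have h4N : (4:ℕ) ∣ 4 ^ N := dvd_pow_self 4 (by omega)
  have h4ge : 4 ≤ 4 ^ N := Nat.le_of_dvd (Nat.pow_pos (by norm_num)) h4N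
  rcases Nat.even_or_odd (i / 2) with he | ho
  · -- i ≡ 0 mod 4
    have hi4 : i % 4 = 0 := by
      obtain ⟨t, ht⟩ := he
      omega
    obtain ⟨a, b, ha, hb, hab, e1, e2, e3⟩ :=
      hilbert_quad N hN (i / 4) (by omega)
    rw [show 4 * (i / 4) = i from by omega] at e1 e2 e3
    have hbd : i + 3 ≤ 4 ^ N - 1 := by omega
    refine ⟨hbd, ?_, ?_⟩ <;>
    · rcases ha with rfl|rfl|rfl|rfl <;> rcases hb with rfl|rfl|rfl|rfl <;>
      · simp only [Prod.ext_iff, Prod.fst_sub, Prod.snd_sub, Prod.fst_add, Prod.snd_add,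
          VertexConnected, abs_eq (by norm_num : (0:ℤ) ≤ 1)] at hstraight e1 e2 e3 hab ⊢
        omega
  · -- i ≡ 2 mod 4 : impossible for a straight index
    have hi4 : i % 4 = 2 := by
      obtain ⟨t, ht⟩ := ho
      omega
    obtain ⟨a, b, ha, hb, hab, e1, e2, e3⟩ :=
      hilbert_quad N hN (i / 4) (by omega)
    rw [show 4 * (i / 4) + 1 = i - 1 from by omega] at e1
    rw [show 4 * (i / 4) + 2 = i from by omega] at e2
    rw [show 4 * (i / 4) + 3 = i + 1 from by omega] at e3
    exfalso
    rcases ha with rfl|rfl|rfl|rfl <;>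
    · simp only [Prod.ext_iff, Prod.fst_sub, Prod.snd_sub, Prod.fst_add, Prod.snd_add]
        at hstraight e1 e2 e3 hab
      omega
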